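/- For all finite multisets Π, Γ of modal formulas and every modal formula φ, ⊢_iGL □((■Γ ⇒ φ)^#) → (Π, □Γ ⇒ □φ)^#, i.e. iGL proves that the box of the interpretation of the premise of the rule R_K4 implies the interpretation of its conclusion. -/

import Mathlib

/-- Modal formulas: propositional variables (indexed by ℕ), ⊥, →, ∧, ∨, □. -/
inductive Formula : Type
  | var : ℕ → Formula
  | bot : Formula
  | imp : Formula → Formula → Formula
  | and : Formula → Formula → Formula
  | or : Formula → Formula → Formula
  | box : Formula → Formula
  deriving DecidableEq
/-- Intuitionistic propositional tautologies in the modal language, given by a standard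
Hilbert-style axiomatization (all axiom schemes instantiated with arbitrary modal formulas)
closed under modus ponens. -/
inductive IPC : Formula → Prop
  | a1 (φ ψ : Formula) : IPC (φ.imp (ψ.imp φ))
  | a2 (φ ψ χ : Formula) : IPC ((φ.imp (ψ.imp χ)).imp ((φ.imp ψ).imp (φ.imp χ)))
  | andI (φ ψ : Formula) : IPC (φ.imp (ψ.imp (φ.and ψ)))
  | andE1 (φ ψ : Formula) : IPC ((φ.and ψ).imp φ)
  | andE2 (φ ψ : Formula) : IPC ((φ.and ψ).imp ψ)
  | orI1 (φ ψ : Formula) : IPC (φ.imp (φ.or ψ))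
  | orI2 (φ ψ : Formula) : IPC (ψ.imp (φ.or ψ))
  | orE (φ ψ χ : Formula) : IPC ((φ.imp χ).imp ((ψ.imp χ).imp ((φ.or ψ).imp χ)))
  | efq (φ : Formula) : IPC (Formula.bot.imp φ)
  | mp {φ ψ : Formula} : IPC (φ.imp ψ) → IPC φ → IPC ψ

/-- The Hilbert system for `iGL`: the smallest intuitionistic normal modal logic containing
all instances of the Löb axiom, i.e. all intuitionistic propositional tautologies, the K axiom
scheme and the Löb axiom scheme, closed under modus ponens and necessitation. -/
inductive iGLH : Formula → Prop
  | taut {φ : Formula} : IPC φ → iGLH φ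
  | k (φ ψ : Formula) : iGLH (((φ.imp ψ).box).imp ((φ.box).imp (ψ.box)))
  | lob (φ : Formula) : iGLH ((((φ.box).imp φ).box).imp (φ.box))
  | mp {φ ψ : Formula} : iGLH (φ.imp ψ) → iGLH φ → iGLH ψ
  | nec {φ : Formula} : iGLH φ → iGLH (φ.box)

/-- `⊤` as the formula `⊥ → ⊥`. -/
def Formula.top : Formula := Formula.bot.imp Formula.bot

/-- The conjunction `⋀Γ` of a list of formulas. -/
def conj (l : List Formula) : Formula := l.foldr Formula.and Formula.top
namespace RK4Aux

open Formula

lemma gid (φ : Formula) : iGLH (φ.imp φ) :=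
  iGLH.mp (iGLH.mp (iGLH.taut (IPC.a2 φ (φ.imp φ) φ)) (iGLH.taut (IPC.a1 φ (φ.imp φ))))
    (iGLH.taut (IPC.a1 φ φ))

lemma gK1 {φ : Formula} (ψ : Formula) (h : iGLH φ) : iGLH (ψ.imp φ) :=
  iGLH.mp (iGLH.taut (IPC.a1 φ ψ)) h

lemma gap {χ φ ψ : Formula} (h1 : iGLH (χ.imp (φ.imp ψ))) (h2 : iGLH (χ.imp φ)) :
    iGLH (χ.imp ψ) :=
  iGLH.mp (iGLH.mp (iGLH.taut (IPC.a2 χ φ ψ)) h1) h2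

lemma gtrans {φ ψ χ : Formula} (h1 : iGLH (φ.imp ψ)) (h2 : iGLH (ψ.imp χ)) :
    iGLH (φ.imp χ) :=
  gap (gK1 φ h2) h1

lemma gswap {φ ψ χ : Formula} (h : iGLH (φ.imp (ψ.imp χ))) : iGLH (ψ.imp (φ.imp χ)) :=
  gtrans (iGLH.taut (IPC.a1 ψ φ)) (iGLH.mp (iGLH.taut (IPC.a2 φ ψ χ)) h)

lemma box_mono {φ ψ : Formula} (h : iGLH (φ.imp ψ)) : iGLH (φ.box.imp ψ.box) :=
  iGLH.mp (iGLH.k φ ψ) (iGLH.nec h)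

/-- `□φ → (□ψ → □(φ ∧ ψ))`. -/
lemma box_and (φ ψ : Formula) : iGLH (φ.box.imp (ψ.box.imp ((φ.and ψ).box))) :=
  gtrans (box_mono (iGLH.taut (IPC.andI φ ψ))) (iGLH.k ψ (φ.and ψ))

/-- The 4 axiom `□φ → □□φ` is derivable from Löb. -/
lemma four (φ : Formula) : iGLH (φ.box.imp φ.box.box) := by
  set ψ := φ.and φ.box with hψ
  have h1 : iGLH (ψ.box.imp φ.box) := box_mono (iGLH.taut (IPC.andE1 φ φ.box))
  have h2 : iGLH (φ.imp (ψ.box.imp ψ)) :=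
    gswap (gtrans h1 (gswap (iGLH.taut (IPC.andI φ φ.box))))
  have h3 : iGLH (φ.box.imp ((ψ.box.imp ψ).box)) :=
    iGLH.mp (iGLH.k φ (ψ.box.imp ψ)) (iGLH.nec h2)
  have h4 : iGLH (φ.box.imp ψ.box) := gtrans h3 (iGLH.lob ψ)
  exact gtrans h4 (box_mono (iGLH.taut (IPC.andE2 φ φ.box)))

lemma conj_proj {a : Formula} : ∀ {l : List Formula}, a ∈ l → iGLH ((conj l).imp a)
  | b :: l, h => by
    rcases List.mem_cons.mp h with h | h
    · subst h; exact iGLH.taut (IPC.andE1 a (conj l))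
    · exact gtrans (iGLH.taut (IPC.andE2 b (conj l))) (conj_proj h)

lemma box_collect (C : Formula) :
    ∀ (l : List Formula), (∀ a ∈ l, iGLH (C.imp a.box)) → iGLH (C.imp (conj l).box)
  | [], _ => gK1 C (iGLH.nec (gid Formula.bot))
  | a :: l, h => by
    have h1 : iGLH (C.imp a.box) := h a List.mem_cons_self
    have h2 : iGLH (C.imp (conj l).box) :=
      box_collect C l (fun b hb => h b (List.mem_cons_of_mem a hb))
    exact gap (gtrans h1 (box_and a (conj l))) h2

end RK4Aux

/-- `iGL` proves that the box of the interpretation of the premise of `R_K4` implies the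
interpretation of its conclusion: `⊢_iGL □((■Γ ⇒ φ)^#) → (Π, □Γ ⇒ □φ)^#`. -/
theorem box_rk4_interp (Pi Γ : List Formula) (φ : Formula) :
    iGLH ((((conj (Γ ++ Γ.map Formula.box)).imp φ).box).imp
      ((conj (Pi ++ Γ.map Formula.box)).imp (φ.box))) := by
  open RK4Aux in
  set C := conj (Pi ++ Γ.map Formula.box) with hC
  set D := conj (Γ ++ Γ.map Formula.box) with hD
  have hCD : iGLH (C.imp D.box) := by
    apply box_collect C
    intro a ha
    rcases List.mem_append.mp ha with ha | ha
    · exact conj_proj (List.mem_append.mpr (Or.inr (List.mem_map.mpr ⟨a, ha, rfl⟩)))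
    · rcases List.mem_map.mp ha with ⟨b, hb, rfl⟩
      exact gtrans (conj_proj (List.mem_append.mpr (Or.inr ha))) (four b)
  have hK : iGLH (((D.imp φ).box).imp (D.box.imp φ.box)) := iGLH.k D φ
  exact gswap (gtrans hCD (gswap hK))
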